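/- In the l-Grigorchuk word η, the words (y,a,y) and (z,a,z) are not factors. -/

import Mathlib

open Filter ENNReal

/-- The left shift on infinite words. -/
def shft {A : Type*} (y : ℕ → A) : ℕ → A := fun n => y (n + 1)

/-- `w` occurs as a factor of the infinite word `y`. -/
def FactorOf {A : Type*} (w : List A) (y : ℕ → A) : Prop :=
  ∃ k, w = (List.range w.length).map fun i => y (k + i)

/-- The language of a subshift `Y`: all finite factors of elements of `Y`. -/
def LangOf {A : Type*} (Y : Set (ℕ → A)) : Set (List A) :=
  {w | ∃ y ∈ Y, FactorOf w y}

/-- The language of an infinite word `x`: all finite factors of `x`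
(equals the language of the subshift `Ω(x)` generated by `x`). -/
def LangX {A : Type*} (x : ℕ → A) : Set (List A) :=
  {w | FactorOf w x}

/-- A subshift: a closed, shift-invariant set of infinite words. -/
def IsSubshift {A : Type*} [TopologicalSpace A] (Y : Set (ℕ → A)) : Prop :=
  IsClosed Y ∧ shft '' Y = Y

/-- The subshift generated by an infinite word `x`: the closure of its shift orbit. -/
def OmegaOf {A : Type*} [TopologicalSpace A] (x : ℕ → A) : Set (ℕ → A) :=
  closure {y | ∃ k, y = shft^[k] x}

/-- `Y` is aperiodic: it contains no periodic point. -/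
def Aperiodic {A : Type*} (Y : Set (ℕ → A)) : Prop :=
  ¬ ∃ y ∈ Y, ∃ k, 0 < k ∧ shft^[k] y = y

/-- `Q(n)`: the supremum of the powers `p` such that some word `W` of length `n`
in the language `L` has `W^p ∈ L`. -/
noncomputable def QfunL {A : Type*} (L : Set (List A)) (n : ℕ) : ℕ∞ :=
  sSup ((fun q : ℕ => (q : ℕ∞)) ''
    {q | ∃ W ∈ L, W.length = n ∧ (List.replicate q W).flatten ∈ L})

/-- The repetitive function `R(n)`: the smallest `r'` such that every word of
length `r'` in `L` contains all words of `L` of length `n` as factors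
(`⊤` if no such `r'` exists). -/
noncomputable def RfunL {A : Type*} (L : Set (List A)) (n : ℕ) : ℕ∞ :=
  sInf ((fun r : ℕ => (r : ℕ∞)) ''
    {r' | ∀ u ∈ L, u.length = r' → ∀ v ∈ L, v.length = n → v <:+: u})

/-- `Q_α = limsup Q(n)/n^(α-1)`. -/
noncomputable def Qalpha {A : Type*} (L : Set (List A)) (α : ℝ) : ℝ≥0∞ :=
  Filter.atTop.limsup fun n : ℕ => (QfunL L n : ℝ≥0∞) / (n : ℝ≥0∞) ^ (α - 1)

/-- `R_α = limsup R(n)/n^α`. -/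
noncomputable def Ralpha {A : Type*} (L : Set (List A)) (α : ℝ) : ℝ≥0∞ :=
  Filter.atTop.limsup fun n : ℕ => (RfunL L n : ℝ≥0∞) / (n : ℝ≥0∞) ^ α

/-- `A_{α,n}`: the infimum of `(|W|-|w|)/|w|^(1/α)` over `w, W` in the language with
`w` a proper nonempty prefix and suffix of `W` and `|W| = n`. -/
noncomputable def AfunL {A : Type*} (L : Set (List A)) (α : ℝ) (n : ℕ) : ℝ≥0∞ :=
  sInf {t | ∃ w W : List A, w ∈ L ∧ W ∈ L ∧ w ≠ [] ∧ w ≠ W ∧ w <+: W ∧ w <:+ W ∧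
    W.length = n ∧ t = ((W.length - w.length : ℕ) : ℝ≥0∞) / (w.length : ℝ≥0∞) ^ (1 / α)}

/-- `ℓ_α = liminf_n A_{α,n}`. -/
noncomputable def lalpha {A : Type*} (L : Set (List A)) (α : ℝ) : ℝ≥0∞ :=
  Filter.atTop.liminf (AfunL L α)

/-- `ℓ`: the repulsiveness constant (no restriction on `|W|`). -/
noncomputable def lconst {A : Type*} (L : Set (List A)) : ℝ≥0∞ :=
  sInf {t | ∃ w W : List A, w ∈ L ∧ W ∈ L ∧ w ≠ [] ∧ w ≠ W ∧ w <+: W ∧ w <:+ W ∧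
    t = ((W.length - w.length : ℕ) : ℝ≥0∞) / (w.length : ℝ≥0∞)}

/-- The four-letter alphabet `{a, x, y, z}` of the Grigorchuk subshift. -/
inductive GW : Type
  | a : GW
  | x : GW
  | y : GW
  | z : GW
  deriving DecidableEq

instance : Fintype GW :=
  ⟨⟨{GW.a, GW.x, GW.y, GW.z}, by decide⟩, fun c => by cases c <;> decide⟩

instance : TopologicalSpace GW := ⊥
instance : DiscreteTopology GW := ⟨rfl⟩
/-- The substitution `τ_b` on letters: `a ↦ (a, b, a)`, fixing the other letters. -/
def tauL (b : GW) : GW → List GW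
  | GW.a => [GW.a, b, GW.a]
  | c => [c]

/-- The substitution `τ_b` on words (monoid homomorphism). -/
def tauW (b : GW) (w : List GW) : List GW := w.flatMap (tauL b)

/-- For a sequence `l` (0-indexed: `l i` is `l_{i+1}` of the paper), `Nblk l j` is
the index of the block containing position `j`, i.e. the unique `n` with
`l 0 + ⋯ + l (n-1) ≤ j < l 0 + ⋯ + l n`;  this is `N(j) - 1` in the paper. -/
noncomputable def Nblk (l : ℕ → ℕ) (j : ℕ) : ℕ :=
  sInf {n : ℕ | j < ∑ i ∈ Finset.range (n + 1), l i}

/-- `q(j)` of the paper: `j` minus the sum of the lengths of the complete blocks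
before position `j`. -/
noncomputable def qrem (l : ℕ → ℕ) (j : ℕ) : ℕ :=
  j - ∑ i ∈ Finset.range (Nblk l j), l i

/-- The letter inserted at step `j + 1`: the blocks use `x, y, z` cyclically. -/
noncomputable def letterAt (l : ℕ → ℕ) (j : ℕ) : GW :=
  match (Nblk l j) % 3 with
  | 0 => GW.x
  | 1 => GW.y
  | _ => GW.z

/-- `gword l j = τ^{(j)}(a)`, via the recursion
`τ^{(j+1)}(a) = τ^{(j)}(a) β τ^{(j)}(a)` with `β = letterAt l j`. -/
noncomputable def gword (l : ℕ → ℕ) : ℕ → List GW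
  | 0 => [GW.a]
  | j + 1 => gword l j ++ letterAt l j :: gword l j

/-- The `l`-Grigorchuk word `η_l`: the unique infinite word having every
`τ^{(j)}(a)` as a prefix. -/
noncomputable def etaG (l : ℕ → ℕ) (n : ℕ) : GW :=
  (gword l (n + 1)).getD n GW.a

/-- The language of the `l`-Grigorchuk subshift: all factors of `η_l`. -/
noncomputable def LangG (l : ℕ → ℕ) : Set (List GW) := LangX (etaG l)

/-- The prefix of `η_l` of length `k`. -/
noncomputable def prefEta (l : ℕ → ℕ) (k : ℕ) : List GW :=
  (List.range k).map (etaG l)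

lemma gword_length (l : ℕ → ℕ) : ∀ j, (gword l j).length = 2^(j+1) - 1 := by
  intro j
  induction j with
  | zero => simp [gword]
  | succ j ih =>
      have h1 : (1:ℕ) ≤ 2^(j+1) := Nat.one_le_two_pow
      have h2 : (2:ℕ)^(j+2) = 2 * 2^(j+1) := by ring
      simp [gword, ih]
      omega

lemma letterAt_zero (l : ℕ → ℕ) (hl : ∀ i, 0 < l i) : letterAt l 0 = GW.x := by
  have hN : Nblk l 0 = 0 := by
    have : (0:ℕ) ∈ {n : ℕ | 0 < ∑ i ∈ Finset.range (n + 1), l i} := by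
      simp [hl 0]
    exact Nat.eq_zero_of_le_zero (Nat.sInf_le this)
  simp [letterAt, hN]

lemma gword_get (l : ℕ → ℕ) (hl : ∀ i, 0 < l i) :
    ∀ j, ∀ i, (h : i < (gword l j).length) →
      (i % 2 = 0 → (gword l j)[i] = GW.a) ∧ (i % 4 = 1 → (gword l j)[i] = GW.x) := by
  intro j
  induction j with
  | zero =>
      intro i h
      simp [gword] at h
      subst h
      simp [gword]
  | succ j ih =>
      intro i h
      match j, ih with
      | 0, _ =>
          have h3 : i < 3 := by
            have := gword_length l (0+1)
            omega
          interval_cases i <;> simp [gword, letterAt_zero l hl]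
      | j + 1, ih =>
          have hL : (gword l (j+1+1)).length = 2^(j+3) - 1 := gword_length l (j+2)
          have hLlen : (gword l (j+1)).length = 2^(j+2) - 1 := gword_length l (j+1)
          have hpow : (2:ℕ)^(j+3) = 2 * 2^(j+2) := by ring
          have hmod : 2^(j+2) % 4 = 0 := by
            have : (2:ℕ)^(j+2) = 4 * 2^j := by ring
            omega
          have h1 : (1:ℕ) ≤ 2^(j+2) := Nat.one_le_two_pow
          set L : ℕ := (gword l (j+1)).length with hLdef
          have hlen2 : i < L + (L + 1) := by omega
          show (i % 2 = 0 → (gword l (j+1) ++ letterAt l (j+1) :: gword l (j+1))[i] = GW.a)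
             ∧ (i % 4 = 1 → (gword l (j+1) ++ letterAt l (j+1) :: gword l (j+1))[i] = GW.x)
          rcases lt_trichotomy i L with hi | hi | hi
          · have := ih i (by omega)
            constructor <;> intro hm <;>
              refine (List.getElem_append_left hi).trans ?_ <;> tauto
          · constructor <;> intro hm
            · exact absurd hm (by omega)
            · exact absurd hm (by omega)
          · have hi' : i - (L + 1) < (gword l (j+1)).length := by omega
            have hget : (gword l (j+1) ++ letterAt l (j+1) :: gword l (j+1))[i] =
                (gword l (j+1))[i - (L+1)]'hi' := by
              refine (List.getElem_append_right (as := gword l (j+1)) (bs := letterAt l (j+1) :: gword l (j+1)) (i := i) (by omega)).trans ?_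
              have hidx : i - L = (i - (L + 1)) + 1 := by omega
              simp [← hLdef, hidx]
            have := ih (i - (L+1)) hi'
            constructor <;> intro hm <;> rw [hget]
            · exact this.1 (by omega)
            · exact this.2 (by omega)

lemma etaG_even (l : ℕ → ℕ) (hl : ∀ i, 0 < l i) (n : ℕ) (hn : n % 2 = 0) :
    etaG l n = GW.a := by
  have hlt : n < (gword l (n+1)).length := by
    have := gword_length l (n+1)
    have h2 : n < 2^(n+1) := (Nat.lt_two_pow_self (n := n)) |>.trans_le (Nat.pow_le_pow_right (by norm_num) (by omega))
    omega
  rw [etaG, List.getD_eq_getElem _ _ hlt]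
  exact (gword_get l hl (n+1) n hlt).1 hn

lemma etaG_one_mod_four (l : ℕ → ℕ) (hl : ∀ i, 0 < l i) (n : ℕ) (hn : n % 4 = 1) :
    etaG l n = GW.x := by
  have hlt : n < (gword l (n+1)).length := by
    have := gword_length l (n+1)
    have h2 : n < 2^(n+1) := (Nat.lt_two_pow_self (n := n)) |>.trans_le (Nat.pow_le_pow_right (by norm_num) (by omega))
    omega
  rw [etaG, List.getD_eq_getElem _ _ hlt]
  exact (gword_get l hl (n+1) n hlt).2 hn

lemma no_bab (l : ℕ → ℕ) (hl : ∀ i, 0 < l i) (b : GW) (hba : b ≠ GW.a)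
    (hbx : b ≠ GW.x) : [b, GW.a, b] ∉ LangG l := by
  rintro ⟨k, hk⟩
  simp [List.range_succ] at hk
  obtain ⟨h0, h1, h2⟩ := hk
  have h4 : k % 4 = 0 ∨ k % 4 = 1 ∨ k % 4 = 2 ∨ k % 4 = 3 := by omega
  rcases h4 with h | h | h | h
  · exact hba (h0.trans (etaG_even l hl k (by omega)))
  · exact hbx (h0.trans (etaG_one_mod_four l hl k h))
  · exact hba (h0.trans (etaG_even l hl k (by omega)))
  · exact hbx (h2.trans (etaG_one_mod_four l hl (k+2) (by omega)))

/-- the words `(y,a,y)` and `(z,a,z)` are not factors of the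
`l`-Grigorchuk word `η`. -/
theorem yay_zaz_not_factor (l : ℕ → ℕ) (hl : ∀ i, 0 < l i) :
    [GW.y, GW.a, GW.y] ∉ LangG l ∧ [GW.z, GW.a, GW.z] ∉ LangG l := by
  exact ⟨no_bab l hl GW.y (by simp) (by simp), no_bab l hl GW.z (by simp) (by simp)⟩
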